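/- Define $A_{k,1} = \frac{2^k k!(k-1)!}{(2k)!}$ and recursively $A_{k,p} = \sum_{l=p-1}^{k-1} \frac{2^k k! \Gamma(k+l)}{2^l l! \Gamma(2k+1)} A_{l,p-1}$ for $p \geq 2$. Then for all $k \geq p \geq 1$, $A_{k,p} \leq \frac{1}{2^{p-2}}$. -/

import Mathlib

open Finset

/-- The coefficients `A_{k,p}`: `A_{k,1} = 2^k k!(k-1)!/(2k)!` and
`A_{k,p} = ∑_{l=p-1}^{k-1} (2^k k! Γ(k+l) / (2^l l! Γ(2k+1))) A_{l,p-1}`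
for `p ≥ 2` (here `Γ(k+l) = (k+l-1)!`, `Γ(2k+1) = (2k)!`). -/
noncomputable def A : ℕ → ℕ → ℝ
  | _, 0 => 0
  | k, 1 => (2 : ℝ) ^ k * (Nat.factorial k : ℝ) * (Nat.factorial (k - 1) : ℝ) /
      (Nat.factorial (2 * k) : ℝ)
  | k, p + 2 => ∑ l ∈ Finset.Ico (p + 1) k,
      (2 : ℝ) ^ k * (Nat.factorial k : ℝ) * (Nat.factorial (k + l - 1) : ℝ) /
        ((2 : ℝ) ^ l * (Nat.factorial l : ℝ) * (Nat.factorial (2 * k) : ℝ)) * A l (p + 1)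

/-- For all `k ≥ p ≥ 1`, `A_{k,p} ≤ 1/2^{p-2} = 2^{2-p}`. -/

lemma key (d l : ℕ) :
    (2*l+2*d+1) * 2^(l+d+1) * Nat.factorial (l+d+1) * Nat.factorial (2*l+d)
      ≤ 2^l * Nat.factorial l * Nat.factorial (2*l+2*d+2) := by
  induction d generalizing l with
  | zero =>
    apply le_of_eq
    simp only [Nat.mul_zero, Nat.add_zero]
    rw [Nat.factorial_succ (2*l+1), Nat.factorial_succ (2*l), Nat.factorial_succ l, pow_succ]
    ring
  | succ d ih =>
    have h := ih (l+1)
    have e1 : 2*(l+1)+2*d+1 = 2*l+2*(d+1)+1 := by ring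
    have e2 : l+1+d+1 = l+(d+1)+1 := by ring
    have e3 : 2*(l+1)+d = (2*l+(d+1))+1 := by ring
    have e4 : 2*(l+1)+2*d+2 = 2*l+2*(d+1)+2 := by ring
    rw [e1, e2, e3, e4, Nat.factorial_succ (2*l+(d+1)), Nat.factorial_succ l, pow_succ 2 l] at h
    have h2 : ((2*l+2*(d+1)+1) * 2^(l+(d+1)+1) * Nat.factorial (l+(d+1)+1) *
          Nat.factorial (2*l+(d+1))) * (2*l+(d+1)+1)
        ≤ (2^l * Nat.factorial l * Nat.factorial (2*l+2*(d+1)+2)) * (2*l+(d+1)+1) :=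
      calc ((2*l+2*(d+1)+1) * 2^(l+(d+1)+1) * Nat.factorial (l+(d+1)+1) *
              Nat.factorial (2*l+(d+1))) * (2*l+(d+1)+1)
          = (2*l+2*(d+1)+1) * 2^(l+(d+1)+1) * Nat.factorial (l+(d+1)+1) *
              ((2*l+(d+1)+1) * Nat.factorial (2*l+(d+1))) := by ring
        _ ≤ 2^l * 2 * ((l+1) * Nat.factorial l) * Nat.factorial (2*l+2*(d+1)+2) := h
        _ = (2^l * Nat.factorial l * Nat.factorial (2*l+2*(d+1)+2)) * (2*(l+1)) := by ring
        _ ≤ (2^l * Nat.factorial l * Nat.factorial (2*l+2*(d+1)+2)) * (2*l+(d+1)+1) :=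
            Nat.mul_le_mul_left _ (by omega)
    exact Nat.le_of_mul_le_mul_right h2 (by omega)

lemma c_le (k l : ℕ) (h : l + 1 ≤ k) :
    (2 : ℝ) ^ k * (Nat.factorial k : ℝ) * (Nat.factorial (k + l - 1) : ℝ) /
        ((2 : ℝ) ^ l * (Nat.factorial l : ℝ) * (Nat.factorial (2 * k) : ℝ))
      ≤ 1 / ((2 * k - 1 : ℕ) : ℝ) := by
  have hk : 1 ≤ k := le_trans (Nat.le_add_left 1 l) h
  have hN := key (k - l - 1) l
  have e1 : 2*l+2*(k-l-1)+1 = 2*k-1 := by omega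
  have e2 : l+(k-l-1)+1 = k := by omega
  have e3 : 2*l+(k-l-1) = k+l-1 := by omega
  have e4 : 2*l+2*(k-l-1)+2 = 2*k := by omega
  rw [e1, e2, e3, e4] at hN
  have hcast : ((2*k-1 : ℕ) : ℝ) * ((2:ℝ)^k * (Nat.factorial k : ℝ) * (Nat.factorial (k+l-1) : ℝ))
      ≤ (2:ℝ)^l * (Nat.factorial l : ℝ) * (Nat.factorial (2*k) : ℝ) := by
    have := (Nat.cast_le (α := ℝ)).2 hN
    simp only [Nat.cast_mul, Nat.cast_pow, Nat.cast_ofNat] at this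
    linarith [this]
  have hd : (0:ℝ) < (2:ℝ)^l * (Nat.factorial l : ℝ) * (Nat.factorial (2*k) : ℝ) := by positivity
  have hc : (0:ℝ) < ((2*k-1 : ℕ) : ℝ) := by
    have : 1 ≤ 2*k-1 := by omega
    exact_mod_cast Nat.lt_of_lt_of_le Nat.zero_lt_one this
  rw [div_le_div_iff₀ hd hc]
  nlinarith [hcast]

lemma sum_c_le (k q : ℕ) (hk : 1 ≤ k) :
    ∑ l ∈ Finset.Ico (q + 1) k,
      (2 : ℝ) ^ k * (Nat.factorial k : ℝ) * (Nat.factorial (k + l - 1) : ℝ) /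
        ((2 : ℝ) ^ l * (Nat.factorial l : ℝ) * (Nat.factorial (2 * k) : ℝ))
      ≤ 1 / 2 := by
  have hcard : (Finset.Ico (q + 1) k).card = k - (q + 1) := Nat.card_Ico _ _
  have h1 : ∑ l ∈ Finset.Ico (q + 1) k,
      (2 : ℝ) ^ k * (Nat.factorial k : ℝ) * (Nat.factorial (k + l - 1) : ℝ) /
        ((2 : ℝ) ^ l * (Nat.factorial l : ℝ) * (Nat.factorial (2 * k) : ℝ))
      ≤ (Finset.Ico (q + 1) k).card • (1 / ((2 * k - 1 : ℕ) : ℝ)) := by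
    apply Finset.sum_le_card_nsmul
    intro l hl
    exact c_le k l (Finset.mem_Ico.mp hl).2
  refine h1.trans ?_
  rw [hcard, nsmul_eq_mul]
  have hc : (0:ℝ) < ((2*k-1 : ℕ) : ℝ) := by
    have : 1 ≤ 2*k-1 := by omega
    exact_mod_cast Nat.lt_of_lt_of_le Nat.zero_lt_one this
  rw [mul_one_div, div_le_div_iff₀ hc (by norm_num : (0:ℝ) < 2)]
  have : (k - (q+1)) * 2 ≤ (2*k-1) * 1 := by omega
  calc ((k - (q+1) : ℕ) : ℝ) * 2 = (((k - (q+1)) * 2 : ℕ) : ℝ) := by push_cast; ring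
    _ ≤ (((2*k-1) * 1 : ℕ) : ℝ) := by exact_mod_cast this
    _ = ((2*k-1 : ℕ) : ℝ) * 1 := by push_cast; ring
    _ = 1 * ((2*k-1 : ℕ) : ℝ) := by ring

lemma A_nonneg_coef (k l : ℕ) : (0:ℝ) ≤ (2 : ℝ) ^ k * (Nat.factorial k : ℝ) * (Nat.factorial (k + l - 1) : ℝ) /
        ((2 : ℝ) ^ l * (Nat.factorial l : ℝ) * (Nat.factorial (2 * k) : ℝ)) := by positivity

theorem A_upper_bound (k p : ℕ) (hp : 1 ≤ p) (hpk : p ≤ k) :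
    A k p ≤ (2 : ℝ) ^ ((2 : ℤ) - (p : ℤ)) := by
  induction p, hp using Nat.le_induction generalizing k with
  | base =>
    -- A k 1 ≤ 2
    have hk : 1 ≤ k := hpk
    have h := c_le k 0 hk
    simp only [pow_zero, Nat.factorial_zero, Nat.cast_one, one_mul, Nat.add_zero] at h
    have hA : A k 1 = (2 : ℝ) ^ k * (Nat.factorial k : ℝ) * (Nat.factorial (k - 1) : ℝ) /
        (Nat.factorial (2 * k) : ℝ) := by simp [A]
    have hc : (1:ℝ) ≤ ((2*k-1 : ℕ) : ℝ) := by
      have : 1 ≤ 2*k-1 := by omega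
      exact_mod_cast this
    have h2 : 1 / ((2*k-1 : ℕ) : ℝ) ≤ 1 := by
      rw [div_le_one (lt_of_lt_of_le one_pos hc)]; exact hc
    rw [hA]
    calc (2 : ℝ) ^ k * (Nat.factorial k : ℝ) * (Nat.factorial (k - 1) : ℝ) /
        (Nat.factorial (2 * k) : ℝ) ≤ 1 / ((2*k-1 : ℕ) : ℝ) := h
      _ ≤ 1 := h2
      _ ≤ (2 : ℝ) ^ ((2 : ℤ) - ((1:ℕ) : ℤ)) := by norm_num
  | succ p hp ih =>
    -- p ≥ 1, show A k (p+1) ≤ 2^(2-(p+1))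
    obtain ⟨q, rfl⟩ : ∃ q, p = q + 1 := ⟨p - 1, by omega⟩
    have hk : 1 ≤ k := le_trans (by omega) hpk
    have hA : A k (q + 2) = ∑ l ∈ Finset.Ico (q + 1) k,
        (2 : ℝ) ^ k * (Nat.factorial k : ℝ) * (Nat.factorial (k + l - 1) : ℝ) /
          ((2 : ℝ) ^ l * (Nat.factorial l : ℝ) * (Nat.factorial (2 * k) : ℝ)) * A l (q + 1) := by
      simp [A]
    set M : ℝ := (2 : ℝ) ^ ((2 : ℤ) - ((q+1 : ℕ) : ℤ)) with hM
    have hMpos : 0 < M := by positivity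
    rw [hA]
    calc ∑ l ∈ Finset.Ico (q + 1) k,
        (2 : ℝ) ^ k * (Nat.factorial k : ℝ) * (Nat.factorial (k + l - 1) : ℝ) /
          ((2 : ℝ) ^ l * (Nat.factorial l : ℝ) * (Nat.factorial (2 * k) : ℝ)) * A l (q + 1)
        ≤ ∑ l ∈ Finset.Ico (q + 1) k,
        (2 : ℝ) ^ k * (Nat.factorial k : ℝ) * (Nat.factorial (k + l - 1) : ℝ) /
          ((2 : ℝ) ^ l * (Nat.factorial l : ℝ) * (Nat.factorial (2 * k) : ℝ)) * M := by
          apply Finset.sum_le_sum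
          intro l hl
          have hml := Finset.mem_Ico.mp hl
          exact mul_le_mul_of_nonneg_left (ih l hml.1) (A_nonneg_coef k l)
      _ = (∑ l ∈ Finset.Ico (q + 1) k,
        (2 : ℝ) ^ k * (Nat.factorial k : ℝ) * (Nat.factorial (k + l - 1) : ℝ) /
          ((2 : ℝ) ^ l * (Nat.factorial l : ℝ) * (Nat.factorial (2 * k) : ℝ))) * M := by
          rw [Finset.sum_mul]
      _ ≤ (1/2) * M := mul_le_mul_of_nonneg_right (sum_c_le k q hk) hMpos.le
      _ = (2 : ℝ) ^ ((2 : ℤ) - ((q + 1 + 1 : ℕ) : ℤ)) := by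
          rw [hM]
          rw [show ((2:ℤ) - ((q+1+1 : ℕ) : ℤ)) = ((2:ℤ) - ((q+1 : ℕ) : ℤ)) + (-1) by push_cast; ring]
          rw [zpow_add₀ (by norm_num : (2:ℝ) ≠ 0)]
          norm_num
          ring
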